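/- Let d ≥ 1 and let p_1, …, p_m ∈ ℝ^d. Then the d-dimensional Lebesgue volume of the convex hull of {p_1, …, p_m} satisfies vol(conv{p_1,…,p_m}) ≤ Σ_{J ⊆ [m], |J| = d+1} (1/d!)·|det Ā[J]|, where for a (d+1)-element subset J, Ā[J] denotes the (d+1)×(d+1) matrix whose columns are the vectors (1, p_j) ∈ ℝ^{d+1} for j ∈ J. -/

import Mathlib

open scoped BigOperators ENNReal
open MeasureTheory


open Matrix in
lemma det_cons_eq_det_diff (d : ℕ) (q : Fin (d+1) → Fin d → ℝ) :
    (Matrix.of fun i j : Fin (d+1) => (Fin.cons (1:ℝ) (q j) : Fin (d+1) → ℝ) i).det =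
      (Matrix.of fun i j : Fin d => q j.succ i - q j.castSucc i).det := by
  set A : Matrix (Fin (d+1)) (Fin (d+1)) ℝ :=
    Matrix.of (fun i j : Fin (d+1) => (Fin.cons (1:ℝ) (q j) : Fin (d+1) → ℝ) i) with hA
  set U : Matrix (Fin (d+1)) (Fin (d+1)) ℝ :=
    Matrix.of (fun i j : Fin (d+1) =>
      if i = j then (1:ℝ) else if (i:ℕ)+1 = (j:ℕ) then -1 else 0) with hUdef
  have hUtri : U.BlockTriangular id := by
    intro i j hij
    simp only [id] at hij
    simp only [hUdef, Matrix.of_apply]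
    rw [if_neg (by omega : ¬ i = j), if_neg (by omega : ¬ (i:ℕ)+1 = (j:ℕ))]
  have hUdet : U.det = 1 := by
    rw [Matrix.det_of_upperTriangular hUtri]
    simp [hUdef]
  have hB0 : ∀ i, (A * U) i 0 = A i 0 := by
    intro i
    rw [Matrix.mul_apply]
    rw [Finset.sum_eq_single 0]
    · simp [hUdef]
    · intro b _ hb
      have hb2 : ¬ (b:ℕ)+1 = ((0:Fin (d+1)):ℕ) := by simp
      simp [hUdef, hb, hb2]
    · simp
  have hBs : ∀ i (j : Fin d), (A * U) i j.succ = A i j.succ - A i j.castSucc := by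
    intro i j
    have hne : j.castSucc ≠ j.succ := Fin.ne_of_lt (Fin.castSucc_lt_succ : j.castSucc < j.succ)
    rw [Matrix.mul_apply]
    have hexp : ∀ k : Fin (d+1), A i k * U k j.succ =
        (if k = j.succ then A i k else 0) + (if k = j.castSucc then -A i k else 0) := by
      intro k
      by_cases h1 : k = j.succ
      · subst h1
        have hU1 : U j.succ j.succ = 1 := by simp [hUdef]
        rw [hU1, mul_one, if_pos rfl, if_neg (Ne.symm hne), add_zero]
      · by_cases h2 : k = j.castSucc
        · subst h2
          have hU2 : U j.castSucc j.succ = -1 := by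
            rw [hUdef]
            simp only [Matrix.of_apply]
            rw [if_neg hne, if_pos (by simp [Fin.coe_castSucc, Fin.val_succ])]
          rw [hU2, if_neg hne, if_pos rfl, zero_add, mul_neg_one]
        · have hU3 : U k j.succ = 0 := by
            rw [hUdef]
            simp only [Matrix.of_apply]
            rw [if_neg h1, if_neg ?_]
            intro h
            apply h2
            apply Fin.ext
            rw [Fin.val_succ] at h
            rw [Fin.coe_castSucc]
            omega
          rw [hU3, mul_zero, if_neg h1, if_neg h2, add_zero]
    rw [Finset.sum_congr rfl (fun k _ => hexp k), Finset.sum_add_distrib]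
    rw [Finset.sum_ite_eq' Finset.univ j.succ (fun k => A i k),
      Finset.sum_ite_eq' Finset.univ j.castSucc (fun k => -A i k)]
    simp [sub_eq_add_neg]
  have hAB : A.det = (A * U).det := by rw [Matrix.det_mul, hUdet, mul_one]
  rw [hAB, Matrix.det_succ_row_zero]
  rw [Finset.sum_eq_single 0]
  · have h00 : (A * U) 0 0 = 1 := by
      rw [hB0]; simp [hA]
    rw [h00, Fin.succAbove_zero]
    have hsub : ((A * U).submatrix Fin.succ Fin.succ) =
        Matrix.of fun i j : Fin d => q j.succ i - q j.castSucc i := by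
      ext i j
      simp only [Matrix.submatrix_apply]
      rw [hBs]
      simp [hA]
    rw [hsub]
    simp
  · intro b _ hb
    obtain ⟨j, rfl⟩ := Fin.exists_succ_eq.mpr hb
    rw [hBs]
    simp [hA]
  · simp


open MeasureTheory

def Osimp (d : ℕ) : Set (Fin d → ℝ) :=
  {y | (∀ j, y j ∈ Set.Icc (0:ℝ) 1) ∧ ∀ j k : Fin d, j ≤ k → y k ≤ y j}

lemma isClosed_Osimp (d : ℕ) : IsClosed (Osimp d) := by
  have h1 : Osimp d = (⋂ j : Fin d, {y : Fin d → ℝ | y j ∈ Set.Icc (0:ℝ) 1}) ∩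
      ⋂ (j : Fin d) (k : Fin d) (_ : j ≤ k), {y : Fin d → ℝ | y k ≤ y j} := by
    ext y
    simp [Osimp, Set.mem_iInter, Set.mem_setOf_eq]
  rw [h1]
  refine IsClosed.inter (isClosed_iInter fun j => ?_)
    (isClosed_iInter fun j => isClosed_iInter fun k => isClosed_iInter fun _ => ?_)
  · exact IsClosed.preimage (continuous_apply j) isClosed_Icc
  · exact isClosed_le (continuous_apply k) (continuous_apply j)

lemma convex_Osimp (d : ℕ) : Convex ℝ (Osimp d) := by
  intro y hy z hz a b ha hb hab
  constructor
  · intro j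
    have h1 := (hy.1 j).1; have h2 := (hy.1 j).2
    have h3 := (hz.1 j).1; have h4 := (hz.1 j).2
    constructor
    · simpa using add_nonneg (mul_nonneg ha h1) (mul_nonneg hb h3)
    · have : a * y j + b * z j ≤ a * 1 + b * 1 :=
        add_le_add (mul_le_mul_of_nonneg_left h2 ha) (mul_le_mul_of_nonneg_left h4 hb)
      simpa [hab] using this
  · intro j k hjk
    have := add_le_add (mul_le_mul_of_nonneg_left (hy.2 j k hjk) ha)
      (mul_le_mul_of_nonneg_left (hz.2 j k hjk) hb)
    simpa using this

lemma funLeft_eq_toLin_permMatrix (d : ℕ) (σ : Equiv.Perm (Fin d)) :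
    (LinearMap.funLeft ℝ ℝ σ : (Fin d → ℝ) →ₗ[ℝ] (Fin d → ℝ)) =
      Matrix.toLin' (σ.permMatrix ℝ) := by
  apply LinearMap.ext
  intro y
  funext i
  simp only [LinearMap.funLeft_apply, Matrix.toLin'_apply, Matrix.mulVec, dotProduct]
  have : ∀ j, (σ.permMatrix ℝ) i j * y j = if σ i = j then y j else 0 := by
    intro j
    simp [Equiv.Perm.permMatrix, PEquiv.toMatrix, Equiv.toPEquiv, ite_mul]
  rw [Finset.sum_congr rfl (fun j _ => this j), Finset.sum_ite_eq Finset.univ (σ i) y]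
  simp

lemma volume_Osimp_le (d : ℕ) :
    volume (Osimp d) ≤ ENNReal.ofReal (1 / (Nat.factorial d : ℝ)) := by
  classical
  set O := Osimp d
  set T : Equiv.Perm (Fin d) → ((Fin d → ℝ) → (Fin d → ℝ)) :=
    fun σ => (LinearMap.funLeft ℝ ℝ σ : (Fin d → ℝ) →ₗ[ℝ] (Fin d → ℝ)) with hT
  have hTapp : ∀ σ y i, T σ y i = y (σ i) := fun σ y i => rfl
  have hTdet : ∀ σ : Equiv.Perm (Fin d),
      |LinearMap.det (LinearMap.funLeft ℝ ℝ σ : (Fin d → ℝ) →ₗ[ℝ] (Fin d → ℝ))| = 1 := by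
    intro σ
    rw [funLeft_eq_toLin_permMatrix, LinearMap.det_toLin', Matrix.det_permutation]
    rcases Int.units_eq_one_or (Equiv.Perm.sign σ) with h | h <;> simp [h]
  have hTvol : ∀ σ : Equiv.Perm (Fin d), volume (T σ ⁻¹' O) = volume O := by
    intro σ
    rw [hT]
    rw [MeasureTheory.Measure.addHaar_preimage_linearMap volume
      (f := (LinearMap.funLeft ℝ ℝ σ : (Fin d → ℝ) →ₗ[ℝ] (Fin d → ℝ)))
      (by intro h; have hh := hTdet σ; rw [h] at hh; simpa using hh) O]
    rw [abs_inv, hTdet σ]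
    simp
  -- closedness / measurability of preimages
  have hTcont : ∀ σ : Equiv.Perm (Fin d), Continuous (T σ) :=
    fun σ => continuous_pi fun i => continuous_apply (σ i)
  have hTmeas : ∀ σ : Equiv.Perm (Fin d), MeasurableSet (T σ ⁻¹' O) :=
    fun σ => ((isClosed_Osimp d).preimage (hTcont σ)).measurableSet
  -- pairwise a.e. disjoint
  have hnull : volume (⋃ (ab : Fin d × Fin d) (_ : ab.1 ≠ ab.2),
      {y : Fin d → ℝ | y ab.1 = y ab.2}) = 0 := by
    refine measure_iUnion_null fun ab => measure_iUnion_null fun hab => ?_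
    have : {y : Fin d → ℝ | y ab.1 = y ab.2} =
        (LinearMap.ker ((LinearMap.proj ab.1 : (Fin d → ℝ) →ₗ[ℝ] ℝ) -
          LinearMap.proj ab.2) : Submodule ℝ (Fin d → ℝ)) := by
      ext y
      simp [LinearMap.mem_ker, sub_eq_zero]
    rw [this]
    apply MeasureTheory.Measure.addHaar_submodule
    intro h
    have h1 : (fun j => if j = ab.1 then (1:ℝ) else 0) ∈
        LinearMap.ker ((LinearMap.proj ab.1 : (Fin d → ℝ) →ₗ[ℝ] ℝ) - LinearMap.proj ab.2) := by
      rw [h]; trivial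
    simp only [LinearMap.mem_ker, LinearMap.sub_apply, LinearMap.proj_apply] at h1
    rw [if_neg (Ne.symm hab)] at h1
    norm_num at h1
  have hdisj : ((Finset.univ : Finset (Equiv.Perm (Fin d))) : Set (Equiv.Perm (Fin d))).Pairwise
      (Function.onFun (MeasureTheory.AEDisjoint volume) (fun σ => T σ ⁻¹' O)) := by
    intro σ _ τ _ hστ
    refine measure_mono_null ?_ hnull
    intro y hy
    obtain ⟨hy1, hy2⟩ := hy
    by_contra hyn
    simp only [Set.mem_iUnion, Set.mem_setOf_eq, not_exists] at hyn
    have hinj : Function.Injective y := by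
      intro a b hab
      by_contra hne
      exact hyn (a, b) hne hab
    -- y ∘ σ and y ∘ τ are strictly antitone
    have hanti : ∀ ρ : Equiv.Perm (Fin d), (T ρ ⁻¹' O) y →
        StrictAnti (fun j => y (ρ j)) := by
      intro ρ hyρ j k hjk
      have hle := hyρ.2 j k (le_of_lt hjk)
      have hne2 : y (ρ k) ≠ y (ρ j) := fun h =>
        (Fin.ne_of_lt hjk).symm (ρ.injective (hinj h))
      exact lt_of_le_of_ne hle hne2
    have hσa := hanti σ hy1
    have hτa := hanti τ hy2
    set ρ : Equiv.Perm (Fin d) := σ.trans τ.symm with hρ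
    have hmono : StrictMono ρ := by
      intro j k hjk
      have h1 : y (τ (ρ k)) < y (τ (ρ j)) := by
        simp only [hρ, Equiv.trans_apply, Equiv.apply_symm_apply]
        exact hσa hjk
      exact (StrictAnti.lt_iff_gt hτa).mp h1
    have hρid : ∀ j, ρ j = j := by
      intro j
      let e : Fin d ≃o Fin d := ⟨ρ, fun {a b} => hmono.le_iff_le⟩
      have he : e = OrderIso.refl (Fin d) := Subsingleton.elim _ _
      have := congrArg (fun (f : Fin d ≃o Fin d) => f j) he
      simpa [e] using this
    apply hστ
    apply Equiv.ext
    intro j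
    have := hρid j
    simp only [hρ, Equiv.trans_apply] at this
    have := congrArg τ this
    rw [Equiv.apply_symm_apply] at this
    rw [this]
  -- sum over permutations
  have hcube : (⋃ σ ∈ (Finset.univ : Finset (Equiv.Perm (Fin d))), T σ ⁻¹' O) ⊆
      Set.pi Set.univ (fun _ : Fin d => Set.Icc (0:ℝ) 1) := by
    intro y hy
    simp only [Set.mem_iUnion] at hy
    obtain ⟨σ, _, hyσ⟩ := hy
    intro i _
    have := hyσ.1 (σ.symm i)
    rwa [hTapp, Equiv.apply_symm_apply] at this
  have hsum : ∑ σ : Equiv.Perm (Fin d), volume (T σ ⁻¹' O) ≤ 1 := by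
    rw [← MeasureTheory.measure_biUnion_finset₀ hdisj
      (fun σ _ => (hTmeas σ).nullMeasurableSet)]
    refine le_trans (measure_mono hcube) ?_
    rw [MeasureTheory.volume_pi_pi]
    simp [Real.volume_Icc]
  rw [Finset.sum_congr rfl (fun σ _ => hTvol σ), Finset.sum_const, Finset.card_univ,
    Fintype.card_perm, Fintype.card_fin, nsmul_eq_mul] at hsum
  have hfact : ENNReal.ofReal (1 / (Nat.factorial d : ℝ)) = 1 / (Nat.factorial d : ℝ≥0∞) := by
    rw [ENNReal.ofReal_div_of_pos (by positivity), ENNReal.ofReal_one, ENNReal.ofReal_natCast]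
  rw [hfact, ENNReal.le_div_iff_mul_le (Or.inl (by simp [Nat.factorial_ne_zero]))
    (Or.inl (by simp)), mul_comm]
  exact hsum

lemma volume_convexHull_simplex_le (d : ℕ) (q : Fin (d+1) → Fin d → ℝ) :
    volume (convexHull ℝ (Set.range q)) ≤
      ENNReal.ofReal ((1 / (Nat.factorial d : ℝ)) *
        |(Matrix.of fun i j : Fin (d+1) => (Fin.cons (1:ℝ) (q j) : Fin (d+1) → ℝ) i).det|) := by
  classical
  set D : Matrix (Fin d) (Fin d) ℝ :=
    Matrix.of (fun i j : Fin d => q j.succ i - q j.castSucc i) with hD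
  set L : (Fin d → ℝ) →ₗ[ℝ] (Fin d → ℝ) := Matrix.toLin' D with hL
  -- the affine map
  set f : (Fin d → ℝ) →ᵃ[ℝ] (Fin d → ℝ) :=
    { toFun := fun y => q 0 + L y
      linear := L
      map_vadd' := by
        intro y v
        simp only [vadd_eq_add, map_add]
        abel } with hf
  -- vertices
  set v : Fin (d+1) → (Fin d → ℝ) := fun k j => if (j:ℕ) < (k:ℕ) then 1 else 0 with hv
  have hvO : ∀ k, v k ∈ Osimp d := by
    intro k
    constructor
    · intro j
      by_cases h : (j:ℕ) < (k:ℕ) <;> simp [hv, h]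
    · intro j j' hjj'
      by_cases h : (j':ℕ) < (k:ℕ)
      · have hj : (j:ℕ) < (k:ℕ) := lt_of_le_of_lt (by exact_mod_cast hjj') h
        simp [hv, h, hj]
      · by_cases hj : (j:ℕ) < (k:ℕ) <;> simp [hv, h, hj]
  have hfv : ∀ k, f (v k) = q k := by
    intro k
    funext i
    show q 0 i + L (v k) i = q k i
    have hLvk : L (v k) i = q k i - q 0 i := by
      rw [hL]
      simp only [Matrix.toLin'_apply]
      rw [Matrix.mulVec, dotProduct]
      set g : ℕ → ℝ := fun n => q ⟨min n d, by omega⟩ i with hg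
      have step1 : ∀ j : Fin d, D i j * v k j =
          (fun n => if n < (k:ℕ) then g (n+1) - g n else 0) (j:ℕ) := by
        intro j
        simp only [hv]
        by_cases h : (j:ℕ) < (k:ℕ)
        · rw [if_pos h, if_pos h, mul_one, hD]
          simp only [Matrix.of_apply]
          have h1 : g ((j:ℕ)+1) = q j.succ i := by
            show q ⟨min ((j:ℕ)+1) d, by omega⟩ i = q j.succ i
            congr 1
            apply Fin.ext
            simp [Nat.min_eq_left (by omega : (j:ℕ)+1 ≤ d)]
          have h2 : g (j:ℕ) = q j.castSucc i := by
            show q ⟨min (j:ℕ) d, by omega⟩ i = q j.castSucc i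
            congr 1
            apply Fin.ext
            simp [Nat.min_eq_left (by omega : (j:ℕ) ≤ d)]
          rw [h1, h2]
        · rw [if_neg h, if_neg h, mul_zero]
      rw [Finset.sum_congr rfl (fun j _ => step1 j)]
      rw [Fin.sum_univ_eq_sum_range (fun n => if n < (k:ℕ) then g (n+1) - g n else 0) d]
      have hfil : (Finset.range d).filter (fun n => n < (k:ℕ)) = Finset.range (k:ℕ) := by
        ext n
        simp only [Finset.mem_filter, Finset.mem_range]
        have := k.isLt
        omega
      rw [← Finset.sum_filter, hfil, Finset.sum_range_sub g (k:ℕ)]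
      have hgk : g (k:ℕ) = q k i := by
        show q ⟨min (k:ℕ) d, by omega⟩ i = q k i
        congr 1
        apply Fin.ext
        simp [Nat.min_eq_left (by omega : (k:ℕ) ≤ d)]
      have hg0 : g 0 = q 0 i := by
        show q ⟨min 0 d, by omega⟩ i = q 0 i
        congr 1
      rw [hgk, hg0]
    rw [hLvk]
    ring
  -- convex hull inclusion
  have hsub : convexHull ℝ (Set.range q) ⊆ f '' Osimp d := by
    apply convexHull_min
    · rintro x ⟨k, rfl⟩
      exact ⟨v k, hvO k, hfv k⟩
    · exact (convex_Osimp d).affine_image f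
  have himg : f '' Osimp d = (fun y => q 0 + y) '' (L '' Osimp d) := by
    rw [Set.image_image]
    rfl
  have hvol1 : volume (f '' Osimp d) = volume (L '' Osimp d) := by
    rw [himg, Set.image_add_left, measure_preimage_add]
  have hvol2 : volume (L '' Osimp d) = ENNReal.ofReal |LinearMap.det L| * volume (Osimp d) := by
    exact Measure.addHaar_image_linearMap volume L (Osimp d)
  have hdetL : |LinearMap.det L| = |D.det| := by
    rw [hL, LinearMap.det_toLin']
  calc volume (convexHull ℝ (Set.range q)) ≤ volume (f '' Osimp d) := measure_mono hsub
    _ = ENNReal.ofReal |D.det| * volume (Osimp d) := by rw [hvol1, hvol2, hdetL]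
    _ ≤ ENNReal.ofReal |D.det| * ENNReal.ofReal (1 / (Nat.factorial d : ℝ)) :=
        mul_le_mul_right (volume_Osimp_le d) _
    _ = ENNReal.ofReal ((1 / (Nat.factorial d : ℝ)) *
        |(Matrix.of fun i j : Fin (d+1) => (Fin.cons (1:ℝ) (q j) : Fin (d+1) → ℝ) i).det|) := by
        rw [← ENNReal.ofReal_mul (abs_nonneg _), det_cons_eq_det_diff, mul_comm]


/-- the Lebesgue volume of the convex hull of `m` points
`p_1,…,p_m ∈ ℝ^d` is at most the sum, over all `(d+1)`-element subsets `J` of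
`[m]`, of `(1/d!)·|det Ā[J]|`, where the columns of `Ā[J]` are the vectors
`(1, p_j)` for `j ∈ J` (listed in increasing order of `j`; the absolute value
of the determinant does not depend on the ordering). -/
theorem volume_convexHull_le_sum_simplices (d m : ℕ) (hd : 1 ≤ d)
    (p : Fin m → (Fin d → ℝ)) :
    MeasureTheory.volume (convexHull ℝ (Set.range p)) ≤
      ENNReal.ofReal
        (∑ J ∈ ((Finset.univ : Finset (Fin m)).powersetCard (d + 1)).attach,
          (1 / (Nat.factorial d : ℝ)) *
            |Matrix.det (Matrix.of fun i j : Fin (d + 1) =>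
              Fin.cons (1 : ℝ)
                (p ((J.1.orderIsoOfFin
                  ((Finset.mem_powersetCard.mp J.2).2) j : Fin m))) i)|) := by
  classical
  set P := ((Finset.univ : Finset (Fin m)).powersetCard (d + 1)) with hP
  by_cases hm : d + 1 ≤ m
  · -- covering by simplices
    have cover : convexHull ℝ (Set.range p) ⊆
        ⋃ J ∈ P.attach, convexHull ℝ (p '' (J.1 : Set (Fin m))) := by
      rw [convexHull_eq_union]
      refine Set.iUnion_subset fun t => Set.iUnion_subset fun hts =>
        Set.iUnion_subset fun hai => ?_
      -- bound the cardinality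
      have hcard : t.card ≤ d + 1 := by
        have h1 := hai.card_le_finrank_succ
        rw [Fintype.card_coe] at h1
        refine le_trans h1 ?_
        have h2 : Module.finrank ℝ (vectorSpan ℝ (Set.range ((↑) : t → (Fin d → ℝ)))) ≤
            Module.finrank ℝ (Fin d → ℝ) := Submodule.finrank_le _
        have h3 : Module.finrank ℝ (Fin d → ℝ) = d := by
          simp [Module.finrank_pi]
        omega
      -- choose index set
      have hsel : ∀ x : t, ∃ j : Fin m, p j = x := fun x => hts x.2
      choose e he using hsel
      set S : Finset (Fin m) := t.attach.image e with hS
      have hScard : S.card ≤ d + 1 := le_trans (Finset.card_image_le.trans (by simp)) hcard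
      obtain ⟨J, hSJ, hJu, hJcard⟩ := Finset.exists_subsuperset_card_eq
        (Finset.subset_univ S) hScard (by simpa using hm)
      have hJP : J ∈ P := by
        rw [hP, Finset.mem_powersetCard]
        exact ⟨hJu, hJcard⟩
      have htJ : (t : Set (Fin d → ℝ)) ⊆ p '' (J : Set (Fin m)) := by
        intro x hx
        refine ⟨e ⟨x, hx⟩, ?_, he ⟨x, hx⟩⟩
        apply hSJ
        rw [hS]
        exact Finset.mem_image.mpr ⟨⟨x, hx⟩, Finset.mem_attach _ _, rfl⟩
      refine le_trans (convexHull_mono htJ) ?_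
      intro x hx
      exact Set.mem_biUnion (Finset.mem_attach P ⟨J, hJP⟩) hx
    refine le_trans (measure_mono cover) ?_
    refine le_trans (measure_biUnion_finset_le P.attach _) ?_
    rw [ENNReal.ofReal_sum_of_nonneg (fun J _ => by positivity)]
    refine Finset.sum_le_sum fun J _ => ?_
    -- per-subset bound
    set q : Fin (d+1) → Fin d → ℝ :=
      fun j => p ((J.1.orderIsoOfFin ((Finset.mem_powersetCard.mp J.2).2) j : Fin m)) with hq
    have himg : p '' (J.1 : Set (Fin m)) = Set.range q := by
      rw [hq]
      ext x
      constructor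
      · rintro ⟨j, hj, rfl⟩
        exact ⟨(J.1.orderIsoOfFin ((Finset.mem_powersetCard.mp J.2).2)).symm ⟨j, hj⟩, by simp⟩
      · rintro ⟨k, rfl⟩
        exact ⟨_, (J.1.orderIsoOfFin ((Finset.mem_powersetCard.mp J.2).2) k).2, rfl⟩
    rw [himg]
    exact volume_convexHull_simplex_le d q
  · -- degenerate case: fewer than d+1 points
    have hvol0 : volume (convexHull ℝ (Set.range p)) = 0 := by
      rcases Nat.eq_zero_or_pos m with hm0 | hm0
      · subst hm0
        have : Set.range p = ∅ := Set.range_eq_empty p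
        rw [this, convexHull_empty]
        simp
      · obtain ⟨n, rfl⟩ : ∃ n, m = n + 1 := ⟨m - 1, by omega⟩
        have hne : affineSpan ℝ (Set.range p) ≠ ⊤ := by
          intro htop
          have h1 := finrank_vectorSpan_range_le ℝ p (Fintype.card_fin (n+1))
          rw [← direction_affineSpan, htop, AffineSubspace.direction_top] at h1
          have h2 : Module.finrank ℝ (⊤ : Submodule ℝ (Fin d → ℝ)) = d := by
            rw [finrank_top]
            simp [Module.finrank_pi]
          omega
        exact measure_mono_null (convexHull_subset_affineSpan _)
          (MeasureTheory.Measure.addHaar_affineSubspace volume _ hne)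
    rw [hvol0]
    exact zero_le
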